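/- Let C = ⟨g_1(x)⟩ be the cyclic code of length n = p^k over R = F[u]/⟨u⁴⟩ generated by g_1(x) = u(x−1)^{r_1} + u²(x−1)^{k_4}p_4(x) + u³(x−1)^{k_5}p_5(x), where 0 ≤ k_4, k_5 < r_1 < n and p_4(x), p_5(x) are units or zero in F[x]/⟨xⁿ − 1⟩. Then u²g_1(x) = u³(x−1)^{r_1} ∈ C and u(x−1)^{n−r_1}g_1(x) = u³(x−1)^{n−r_1+k_4}p_4(x) ∈ C. Consequently, if p_4(x) is a unit, then the third torsional degree of C satisfies t_3 ≤ min{r_1, n − r_1 + k_4}. -/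

import Mathlib

open Polynomial
open scoped Classical

noncomputable section

/-- The ring `R = F[u]/⟨u⁴⟩`. -/
abbrev Rq (F : Type) [Field F] : Type :=
  Polynomial F ⧸ Ideal.span ({X ^ 4} : Set (Polynomial F))

instance instCommRingRq (F : Type) [Field F] : CommRing (Rq F) :=
  Ideal.Quotient.commRing _

/-- The ring `S = R[x]/⟨xⁿ − 1⟩`. -/
abbrev Sq (F : Type) [Field F] (n : ℕ) : Type :=
  Polynomial (Rq F) ⧸ Ideal.span ({X ^ n - 1} : Set (Polynomial (Rq F)))

instance instCommRingSq (F : Type) [Field F] (n : ℕ) : CommRing (Sq F n) :=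
  Ideal.Quotient.commRing _

/-- The ring `Q = F[x]/⟨xⁿ − 1⟩`. -/
abbrev Qq (F : Type) [Field F] (n : ℕ) : Type :=
  Polynomial F ⧸ Ideal.span ({X ^ n - 1} : Set (Polynomial F))

/-- The element `u` of `R`. -/
def uu (F : Type) [Field F] : Rq F := Ideal.Quotient.mk _ X

/-- The element `u` of `S`. -/
def uS (F : Type) [Field F] (n : ℕ) : Sq F n := Ideal.Quotient.mk _ (C (uu F))

/-- The element `x` of `S`. -/
def xS (F : Type) [Field F] (n : ℕ) : Sq F n := Ideal.Quotient.mk _ X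

/-- The element `x` of `Q`. -/
def xQ (F : Type) [Field F] (n : ℕ) : Qq F n := Ideal.Quotient.mk _ X

/-- Reduction `R → F` modulo `u`. -/
def resHom (F : Type) [Field F] : Rq F →+* F :=
  Ideal.Quotient.lift _ (evalRingHom 0) (by
    intro a ha
    rw [Ideal.mem_span_singleton] at ha
    obtain ⟨c, rfl⟩ := ha
    simp)

/-- Reduction `μ : S → Q` modulo `u`. -/
def muHom (F : Type) [Field F] (n : ℕ) : Sq F n →+* Qq F n :=
  Ideal.Quotient.lift _ ((Ideal.Quotient.mk _).comp (mapRingHom (resHom F))) (by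
    intro a ha
    rw [Ideal.mem_span_singleton] at ha
    obtain ⟨c, rfl⟩ := ha
    rw [RingHom.comp_apply, map_mul, Ideal.Quotient.eq_zero_iff_mem]
    apply Ideal.mul_mem_right
    have h : (mapRingHom (resHom F)) (X ^ n - 1 : Polynomial (Rq F))
        = (X ^ n - 1 : Polynomial F) := by simp
    rw [h]
    exact Ideal.subset_span rfl)

/-- The natural lift `Q → S` (sending `a ∈ F` to itself and `x ↦ x`). -/
def liftQS (F : Type) [Field F] (n : ℕ) : Qq F n →+* Sq F n :=
  Ideal.Quotient.lift _
    ((Ideal.Quotient.mk _).comp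
      (mapRingHom ((Ideal.Quotient.mk _).comp (C : F →+* Polynomial F)))) (by
    intro a ha
    rw [Ideal.mem_span_singleton] at ha
    obtain ⟨c, rfl⟩ := ha
    rw [RingHom.comp_apply, map_mul, Ideal.Quotient.eq_zero_iff_mem]
    apply Ideal.mul_mem_right
    have h : (mapRingHom ((Ideal.Quotient.mk (Ideal.span ({X ^ 4} : Set (Polynomial F)))).comp
        (C : F →+* Polynomial F))) (X ^ n - 1 : Polynomial F)
        = (X ^ n - 1 : Polynomial (Rq F)) := by simp
    rw [h]
    exact Ideal.subset_span rfl)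

/-- The `i`-th torsion code `Tor_i(C) = {μ(g) : uⁱ·g ∈ C}`, as a subset of `Q`. -/
def TorSet (F : Type) [Field F] (n : ℕ) (i : ℕ) (Cc : Ideal (Sq F n)) : Set (Qq F n) :=
  { a | ∃ g : Sq F n, (uS F n) ^ i * g ∈ Cc ∧ muHom F n g = a }

/-- The code `C` has `i`-th torsional degree `t`, i.e. `Tor_i(C) = ⟨(x−1)^t⟩` with `0 ≤ t ≤ n`. -/
def HasTorDeg (F : Type) [Field F] (n : ℕ) (i : ℕ) (Cc : Ideal (Sq F n)) (t : ℕ) : Prop :=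
  t ≤ n ∧ TorSet F n i Cc = ↑(Ideal.span {(xQ F n - 1) ^ t})

/-- An element of `S` that is the lift of a unit of `Q = F[x]/⟨xⁿ−1⟩`. -/
def IsUnitLift (F : Type) [Field F] (n : ℕ) (a : Sq F n) : Prop :=
  ∃ q : Qq F n, IsUnit q ∧ a = liftQS F n q

/-- An element of `S` that is zero or the lift of a unit of `Q = F[x]/⟨xⁿ−1⟩`. -/
def UnitOrZeroLift (F : Type) [Field F] (n : ℕ) (a : Sq F n) : Prop :=
  a = 0 ∨ IsUnitLift F n a

section Aux

variable (F : Type) [Field F]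

lemma uS_pow_four (n : ℕ) : uS F n ^ 4 = 0 := by
  have h : uu F ^ 4 = 0 := by
    rw [uu, ← map_pow, Ideal.Quotient.eq_zero_iff_mem]
    exact Ideal.subset_span rfl
  rw [uS, ← map_pow, ← C_pow, h, map_zero, map_zero]

lemma mu_lift (n : ℕ) (a : Qq F n) : muHom F n (liftQS F n a) = a := by
  obtain ⟨f, rfl⟩ := Ideal.Quotient.mk_surjective a
  have hcomp : (resHom F).comp ((Ideal.Quotient.mk
      (Ideal.span ({X ^ 4} : Set (Polynomial F)))).comp (C : F →+* Polynomial F))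
      = RingHom.id F := by
    ext a
    simp [resHom]
  simp only [liftQS, muHom, Ideal.Quotient.lift_mk, RingHom.comp_apply, coe_mapRingHom,
    Polynomial.map_map, hcomp, Polynomial.map_id]

lemma mu_xS (n : ℕ) : muHom F n (xS F n) = xQ F n := by
  simp [muHom, xS, xQ]

/-- The canonical map `F[X] → S` sending `X` to `xS`. -/
def psiS (n : ℕ) : Polynomial F →+* Sq F n :=
  (Ideal.Quotient.mk _).comp
    (mapRingHom ((Ideal.Quotient.mk _).comp (C : F →+* Polynomial F)))

lemma psiS_X (n : ℕ) : psiS F n X = xS F n := by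
  simp [psiS, xS]

lemma poly_frob (p k : ℕ) [Fact p.Prime] [CharP F p] :
    ((X : Polynomial F) - 1) ^ p ^ k = X ^ p ^ k - 1 := by
  rw [sub_pow_char_pow, one_pow]

lemma xS_sub_one_pow (p k : ℕ) [Fact p.Prime] [CharP F p] :
    (xS F (p ^ k) - 1) ^ p ^ k = 0 := by
  have h := congrArg (psiS F (p ^ k)) (poly_frob F p k)
  simp only [map_pow, map_sub, map_one, psiS_X] at h
  rw [h]
  rw [show (xS F (p ^ k)) ^ p ^ k - 1 = psiS F (p ^ k) (X ^ p ^ k - 1) by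
    simp [psiS_X, map_sub, map_pow, map_one]]
  rw [psiS, RingHom.comp_apply, Ideal.Quotient.eq_zero_iff_mem]
  apply Ideal.subset_span
  simp

lemma key (p k : ℕ) [Fact p.Prime] [CharP F p] (r t : ℕ) (hr : r < p ^ k) (ht : t ≤ p ^ k)
    (h : (xQ F (p ^ k) - 1) ^ r ∈ Ideal.span {(xQ F (p ^ k) - 1) ^ t}) : t ≤ r := by
  rw [Ideal.mem_span_singleton] at h
  obtain ⟨c, hc⟩ := h
  obtain ⟨f, rfl⟩ := Ideal.Quotient.mk_surjective c
  have hc' : (Ideal.Quotient.mk _) (((X : Polynomial F) - 1) ^ r - ((X - 1) ^ t) * f)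
      = (0 : Qq F (p ^ k)) := by
    rw [map_sub, map_mul, map_pow, map_pow, map_sub, map_one]
    rw [show (Ideal.Quotient.mk (Ideal.span ({X ^ p ^ k - 1} : Set (Polynomial F)))) X
      = xQ F (p ^ k) from rfl]
    rw [hc]
    ring
  rw [Ideal.Quotient.eq_zero_iff_mem, Ideal.mem_span_singleton] at hc'
  obtain ⟨d, hd⟩ := hc'
  have hdvd : ((X : Polynomial F) - 1) ^ t ∣ (X - 1) ^ r := by
    have : ((X : Polynomial F) - 1) ^ r = (X - 1) ^ t * f + (X ^ p ^ k - 1) * d := by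
      linear_combination hd
    rw [this, ← poly_frob F p k]
    exact dvd_add (Dvd.intro _ rfl) ((pow_dvd_pow _ ht).mul_right d)
  have hC1 : ((X : Polynomial F) - 1) = X - C 1 := by rw [map_one]
  rw [hC1] at hdvd
  have hne : ((X : Polynomial F) - C 1) ^ r ≠ 0 := pow_ne_zero _ (X_sub_C_ne_zero 1)
  have := (Polynomial.le_rootMultiplicity_iff hne).mpr hdvd
  rwa [Polynomial.rootMultiplicity_X_sub_C_pow] at this

end Aux


set_option maxHeartbeats 1000000 in
/-- `u²g₁ = u³(x−1)^{r₁} ∈ C` and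
`u(x−1)^{n−r₁}g₁ = u³(x−1)^{n−r₁+k₄}p₄ ∈ C`; if moreover `p₄` is a unit then
`t₃ ≤ min{r₁, n − r₁ + k₄}`. -/
theorem stmt_9 (p m k : ℕ) (hp : Nat.Prime p) (hm : 1 ≤ m) (hk : 1 ≤ k)
    (F : Type) [Field F] [Fintype F] (hF : Fintype.card F = p ^ m)
    (r₁ k₄ k₅ : ℕ) (hk₄ : k₄ < r₁) (hk₅ : k₅ < r₁) (hr₁ : r₁ < p ^ k)
    (p₄ p₅ : Sq F (p ^ k))
    (hp₄ : UnitOrZeroLift F (p ^ k) p₄) (hp₅ : UnitOrZeroLift F (p ^ k) p₅)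
    (g₁ : Sq F (p ^ k))
    (hg₁ : g₁ = uS F (p ^ k) * (xS F (p ^ k) - 1) ^ r₁
        + uS F (p ^ k) ^ 2 * (xS F (p ^ k) - 1) ^ k₄ * p₄
        + uS F (p ^ k) ^ 3 * (xS F (p ^ k) - 1) ^ k₅ * p₅)
    (C : Ideal (Sq F (p ^ k))) (hC : C = Ideal.span {g₁}) :
    uS F (p ^ k) ^ 2 * g₁ = uS F (p ^ k) ^ 3 * (xS F (p ^ k) - 1) ^ r₁ ∧
    uS F (p ^ k) ^ 3 * (xS F (p ^ k) - 1) ^ r₁ ∈ C ∧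
    uS F (p ^ k) * (xS F (p ^ k) - 1) ^ (p ^ k - r₁) * g₁
      = uS F (p ^ k) ^ 3 * (xS F (p ^ k) - 1) ^ (p ^ k - r₁ + k₄) * p₄ ∧
    uS F (p ^ k) ^ 3 * (xS F (p ^ k) - 1) ^ (p ^ k - r₁ + k₄) * p₄ ∈ C ∧
    (IsUnitLift F (p ^ k) p₄ →
      ∀ t₃ : ℕ, HasTorDeg F (p ^ k) 3 C t₃ → t₃ ≤ min r₁ (p ^ k - r₁ + k₄)) := by
  haveI : Fact p.Prime := ⟨hp⟩
  haveI hcharF : CharP F p := by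
    have hcard : (Fintype.card F : F) = 0 := Nat.cast_card_eq_zero F
    rw [hF, Nat.cast_pow] at hcard
    have hp0 : (p : F) = 0 := by
      rcases pow_eq_zero_iff (by omega : m ≠ 0) |>.mp hcard with h
      exact h
    have hdvd : ringChar F ∣ p := ringChar.dvd hp0
    rcases (Nat.dvd_prime hp).mp hdvd with h1 | hpp
    · exact absurd (ringChar.eq_iff.mp h1) (by
        intro hh
        exact one_ne_zero ((CharP.cast_eq_zero_iff F 1 1).mpr dvd_rfl |>.symm.trans (by norm_num)).symm)
    · exact hpp ▸ ringChar.charP F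
  have h4 : uS F (p ^ k) ^ 4 = 0 := uS_pow_four F (p ^ k)
  have hyn : (xS F (p ^ k) - 1) ^ p ^ k = 0 := xS_sub_one_pow F p k
  have e1 : uS F (p ^ k) ^ 2 * g₁ = uS F (p ^ k) ^ 3 * (xS F (p ^ k) - 1) ^ r₁ := by
    rw [hg₁]
    linear_combination ((xS F (p ^ k) - 1) ^ k₄ * p₄ + uS F (p ^ k) * (xS F (p ^ k) - 1) ^ k₅ * p₅) * h4
  have hsplit : (xS F (p ^ k) - 1) ^ (p ^ k - r₁) * (xS F (p ^ k) - 1) ^ r₁ = 0 := by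
    rw [← pow_add, Nat.sub_add_cancel hr₁.le, hyn]
  have hpa : (xS F (p ^ k) - 1) ^ (p ^ k - r₁ + k₄) = (xS F (p ^ k) - 1) ^ (p ^ k - r₁) * (xS F (p ^ k) - 1) ^ k₄ := pow_add _ _ _
  have e2 : uS F (p ^ k) * (xS F (p ^ k) - 1) ^ (p ^ k - r₁) * g₁ = uS F (p ^ k) ^ 3 * (xS F (p ^ k) - 1) ^ (p ^ k - r₁ + k₄) * p₄ := by
    rw [hg₁, hpa]
    linear_combination uS F (p ^ k) ^ 2 * hsplit + ((xS F (p ^ k) - 1) ^ (p ^ k - r₁) * (xS F (p ^ k) - 1) ^ k₅ * p₅) * h4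
  have hg₁C : g₁ ∈ C := hC ▸ Ideal.subset_span rfl
  have m1 : uS F (p ^ k) ^ 3 * (xS F (p ^ k) - 1) ^ r₁ ∈ C := e1 ▸ Ideal.mul_mem_left C _ hg₁C
  have m2 : uS F (p ^ k) ^ 3 * (xS F (p ^ k) - 1) ^ (p ^ k - r₁ + k₄) * p₄ ∈ C := e2 ▸ Ideal.mul_mem_left C _ hg₁C
  refine ⟨e1, m1, e2, m2, ?_⟩
  rintro ⟨q₄, hq₄u, rfl⟩ t₃ ⟨ht₃n, hTor⟩
  -- (xQ - 1)^r₁ ∈ TorSet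
  have hyr : (xQ F (p ^ k) - 1) ^ r₁ ∈ Ideal.span {(xQ F (p ^ k) - 1) ^ t₃} := by
    have hmem : (xQ F (p ^ k) - 1) ^ r₁ ∈ TorSet F (p ^ k) 3 C := by
      refine ⟨(xS F (p ^ k) - 1) ^ r₁, m1, ?_⟩
      rw [map_pow, map_sub, map_one, mu_xS]
    rw [hTor] at hmem
    exact SetLike.mem_coe.mp hmem
  have hyq : (xQ F (p ^ k) - 1) ^ (p ^ k - r₁ + k₄) ∈ Ideal.span {(xQ F (p ^ k) - 1) ^ t₃} := by
    have hmem : (xQ F (p ^ k) - 1) ^ (p ^ k - r₁ + k₄) * q₄ ∈ TorSet F (p ^ k) 3 C := by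
      refine ⟨(xS F (p ^ k) - 1) ^ (p ^ k - r₁ + k₄) * liftQS F (p ^ k) q₄,
        by rw [← mul_assoc]; exact m2, ?_⟩
      rw [map_mul, mu_lift, map_pow, map_sub, map_one, mu_xS]
    rw [hTor] at hmem
    have hmem' : (xQ F (p ^ k) - 1) ^ (p ^ k - r₁ + k₄) * q₄ ∈ Ideal.span {(xQ F (p ^ k) - 1) ^ t₃} :=
      SetLike.mem_coe.mp hmem
    have := Ideal.mul_mem_right (↑hq₄u.unit⁻¹) _ hmem'
    rwa [mul_assoc, hq₄u.mul_val_inv, mul_one] at this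
  have hlt2 :p ^ k - r₁ + k₄ < p ^ k := by omega
  exact le_min (key F p k r₁ t₃ hr₁ ht₃n hyr) (key F p k (p ^ k - r₁ + k₄) t₃ hlt2 ht₃n hyq)

end
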